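/- Let D be a finite multidigraph and let s ≠ t be vertices such that the out-degree of s exceeds its in-degree by exactly one, the in-degree of t exceeds its out-degree by exactly one, and every other vertex has in-degree equal to out-degree. Then the arc-multiplicity function of D is the sum of the arc-multiplicity function of a directed path from s to t and a finite sum of arc-multiplicity functions of directed cycles. -/

import Mathlib

/-- `c` is the arc-multiplicity function of a directed cycle: there is a sequence of
`k + 1 ≥ 1` pairwise distinct vertices `w 0, …, w k` such that each arc
`w i → w (i+1)` (indices cyclically, in `Fin (k+1)`) has multiplicity `1`, and all
other multiplicities are `0`. -/
def IsCycle {V : Type*} (c : V → V → ℕ) : Prop :=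
  ∃ (k : ℕ) (w : Fin (k + 1) → V), Function.Injective w ∧
    (∀ i : Fin (k + 1), c (w i) (w (i + 1)) = 1) ∧
    (∀ u v : V, (∀ i : Fin (k + 1), ¬(u = w i ∧ v = w (i + 1))) → c u v = 0)

/-- `m` is a finite sum of arc-multiplicity functions of directed cycles. -/
def IsCycleSum {V : Type*} (m : V → V → ℕ) : Prop :=
  ∃ (n : ℕ) (c : Fin n → (V → V → ℕ)),
    (∀ i, IsCycle (c i)) ∧ ∀ u v, m u v = ∑ i, c i u v

/-- `p` is the arc-multiplicity function of a directed path from `s` to `t`: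
there is a sequence of pairwise distinct vertices `s = w 0, …, w k = t` such that
each arc `w i → w (i+1)` has multiplicity `1` and all other multiplicities are `0`. -/
def IsPath {V : Type*} (p : V → V → ℕ) (s t : V) : Prop :=
  ∃ (k : ℕ) (w : Fin (k + 1) → V), Function.Injective w ∧
    w 0 = s ∧ w (Fin.last k) = t ∧
    (∀ i : Fin k, p (w i.castSucc) (w i.succ) = 1) ∧
    (∀ u v : V, (∀ i : Fin k, ¬(u = w i.castSucc ∧ v = w i.succ)) → p u v = 0)

/-- A cycle has in-degree equal to out-degree at every vertex. -/
lemma IsCycle.deg {V : Type*} [Fintype V] {c : V → V → ℕ} (h : IsCycle c) (v : V) :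
    ∑ u, c u v = ∑ u, c v u := by
  classical
  obtain ⟨k, w, winj, hone, hzero⟩ := h
  by_cases hv : ∃ l, v = w l
  · obtain ⟨l, rfl⟩ := hv
    have hout : ∀ u, c (w l) u = if u = w (l + 1) then 1 else 0 := by
      intro u
      split
      · next heq => rw [heq]; exact hone l
      · next hne =>
        apply hzero
        rintro l' ⟨h1, h2⟩
        exact hne (h2.trans (by rw [winj h1]))
    have hin : ∀ u, c u (w l) = if u = w (l - 1) then 1 else 0 := by
      intro u
      split
      · next heq =>
        rw [heq]
        have := hone (l - 1)
        rwa [sub_add_cancel] at this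
      · next hne =>
        apply hzero
        rintro l' ⟨h1, h2⟩
        have hl' : l' = l - 1 := eq_sub_of_add_eq (winj h2.symm)
        exact hne (by rw [h1, hl'])
    have e1 : ∑ u, c u (w l) = 1 := by
      rw [Finset.sum_congr rfl (fun u _ => hin u)]
      simp
    have e2 : ∑ u, c (w l) u = 1 := by
      rw [Finset.sum_congr rfl (fun u _ => hout u)]
      simp
    rw [e1, e2]
  · have h1 : ∀ u, c u v = 0 := by
      intro u
      apply hzero
      rintro l ⟨_, h2⟩
      exact hv ⟨l + 1, h2⟩
    have h2 : ∀ u, c v u = 0 := by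
      intro u
      apply hzero
      rintro l ⟨h1', _⟩
      exact hv ⟨l, h1'⟩
    rw [Finset.sum_eq_zero fun u _ => h1 u, Finset.sum_eq_zero fun u _ => h2 u]

/-- From any arc in a balanced multidigraph one can extract a directed cycle. -/
lemma exists_cycle_le {V : Type*} [Fintype V] (m : V → V → ℕ)
    (hbal : ∀ v, ∑ u, m u v = ∑ u, m v u) {a b : V} (hab : 0 < m a b) :
    ∃ c : V → V → ℕ, IsCycle c ∧ ∀ u v, c u v ≤ m u v := by
  classical
  have key : ∀ v : V, (∃ u, 0 < m u v) → ∃ u, 0 < m v u := by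
    rintro v ⟨u, hu⟩
    have h1 : 0 < ∑ x, m x v :=
      lt_of_lt_of_le hu (Finset.single_le_sum (f := fun x => m x v)
        (fun _ _ => Nat.zero_le _) (Finset.mem_univ u))
    rw [hbal v] at h1
    by_contra hcon
    push_neg at hcon
    simp only [Nat.le_zero] at hcon
    simp [hcon] at h1
  set next : V → V := fun v => if h : ∃ u, 0 < m v u then h.choose else v with hnext
  have hstep : ∀ v : V, (∃ u, 0 < m v u) → 0 < m v (next v) ∧ ∃ u, 0 < m (next v) u := by
    intro v hv
    have h1 : 0 < m v (next v) := by
      simp only [hnext, dif_pos hv]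
      exact hv.choose_spec
    exact ⟨h1, key _ ⟨v, h1⟩⟩
  set x : ℕ → V := fun n => next^[n] a with hxdef
  have hiter : ∀ n, x (n + 1) = next (x n) := by
    intro n; simp only [hxdef, Function.iterate_succ_apply']
  have hinv : ∀ n, ∃ u, 0 < m (x n) u := by
    intro n
    induction n with
    | zero => exact ⟨b, hab⟩
    | succ n ih => rw [hiter]; exact (hstep _ ih).2
  have hx : ∀ n, 0 < m (x n) (x (n + 1)) := by
    intro n; rw [hiter]; exact (hstep _ (hinv n)).1
  -- find a repetition
  obtain ⟨i', j', hne, heq⟩ := Finite.exists_ne_map_eq_of_infinite x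
  have hP : ∃ j : ℕ, ∃ i, i < j ∧ x i = x j := by
    rcases Nat.lt_or_ge i' j' with h | h
    · exact ⟨j', i', h, heq⟩
    · exact ⟨i', j', lt_of_le_of_ne h (Ne.symm hne), heq.symm⟩
  set j := Nat.find hP with hjdef
  obtain ⟨i, hij, hxij⟩ := Nat.find_spec hP
  have hmin : ∀ p q, p < q → q < j → x p ≠ x q := by
    intro p q hpq hqj hx'
    exact Nat.find_min hP hqj ⟨p, hpq, hx'⟩
  set k := j - i - 1 with hkdef
  have hjik : j = i + k + 1 := by omega
  set w : Fin (k + 1) → V := fun l => x (i + l.val) with hwdef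
  have winj : Function.Injective w := by
    intro l1 l2 h
    by_contra hne'
    have hne'' : l1.val ≠ l2.val := fun hc => hne' (Fin.ext hc)
    rcases Nat.lt_or_ge l1.val l2.val with hlt | hge
    · exact hmin (i + l1.val) (i + l2.val) (by omega) (by omega) h
    · exact hmin (i + l2.val) (i + l1.val) (by omega) (by omega) h.symm
  have harc : ∀ l : Fin (k + 1), 0 < m (w l) (w (l + 1)) := by
    intro l
    have hval : ((l + 1 : Fin (k + 1))).val = (l.val + 1) % (k + 1) := by
      simp [Fin.add_def]
    rcases Nat.lt_or_ge l.val k with hlt | hge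
    · have : ((l + 1 : Fin (k + 1))).val = l.val + 1 := by
        rw [hval, Nat.mod_eq_of_lt (by omega)]
      have harc' := hx (i + l.val)
      simp only [hwdef, this]
      have heq' : i + (l.val + 1) = i + l.val + 1 := by omega
      rw [heq']
      exact harc'
    · have hlk : l.val = k := by omega
      have : ((l + 1 : Fin (k + 1))).val = 0 := by rw [hval, hlk]; simp
      have harc' := hx (i + k)
      simp only [hwdef, this, hlk, add_zero]
      have : x (i + k + 1) = x i := by rw [← hjik, ← hxij]
      rwa [this] at harc'
  set c : V → V → ℕ := fun u v => if ∃ l : Fin (k + 1), u = w l ∧ v = w (l + 1) then 1 else 0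
    with hcdef
  refine ⟨c, ⟨k, w, winj, ?_, ?_⟩, ?_⟩
  · intro l
    exact if_pos ⟨l, rfl, rfl⟩
  · intro u v h
    exact if_neg (not_exists.mpr h)
  · intro u v
    simp only [hcdef]
    split
    · next hex =>
      obtain ⟨l, rfl, rfl⟩ := hex
      exact harc l
    · exact Nat.zero_le _

/-- A balanced multidigraph is a sum of cycles. -/
lemma balanced_isCycleSum {V : Type*} [Fintype V] (N : ℕ) (m : V → V → ℕ)
    (hN : ∑ u, ∑ v, m u v ≤ N) (hbal : ∀ v, ∑ u, m u v = ∑ u, m v u) :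
    IsCycleSum m := by
  classical
  induction N generalizing m with
  | zero =>
    refine ⟨0, ![], fun i => i.elim0, fun u v => ?_⟩
    have h1 : m u v ≤ ∑ v', m u v' :=
      Finset.single_le_sum (fun _ _ => Nat.zero_le _) (Finset.mem_univ v)
    have h2 : ∑ v', m u v' ≤ ∑ u', ∑ v', m u' v' :=
      Finset.single_le_sum (f := fun u' => ∑ v', m u' v')
        (fun _ _ => Nat.zero_le _) (Finset.mem_univ u)
    simp only [Finset.univ_eq_empty, Finset.sum_empty]
    omega
  | succ N ih =>
    by_cases h0 : ∀ u v, m u v = 0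
    · exact ⟨0, ![], fun i => i.elim0, fun u v => by simp [h0]⟩
    · push_neg at h0
      obtain ⟨a, b, hab⟩ := h0
      obtain ⟨c, hc, hcle⟩ := exists_cycle_le m hbal (Nat.pos_of_ne_zero hab)
      set m' : V → V → ℕ := fun u v => m u v - c u v with hm'def
      have hadd : ∀ u v, m u v = c u v + m' u v := by
        intro u v; have := hcle u v; simp only [hm'def]; omega
      have hbal' : ∀ v, ∑ u, m' u v = ∑ u, m' v u := by
        intro v
        have e1 : ∑ u, m u v = ∑ u, c u v + ∑ u, m' u v := by
          rw [← Finset.sum_add_distrib]; exact Finset.sum_congr rfl fun u _ => hadd u v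
        have e2 : ∑ u, m v u = ∑ u, c v u + ∑ u, m' v u := by
          rw [← Finset.sum_add_distrib]; exact Finset.sum_congr rfl fun u _ => hadd v u
        have e3 := hbal v
        have e4 := hc.deg v
        omega
      have hsize : ∑ u, ∑ v, m' u v ≤ N := by
        have e1 : ∑ u, ∑ v, m u v = ∑ u, ∑ v, c u v + ∑ u, ∑ v, m' u v := by
          rw [← Finset.sum_add_distrib]
          refine Finset.sum_congr rfl fun u _ => ?_
          rw [← Finset.sum_add_distrib]
          exact Finset.sum_congr rfl fun v _ => hadd u v
        have e2 : 1 ≤ ∑ u, ∑ v, c u v := by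
          obtain ⟨k, w, _, hone, _⟩ := hc
          calc 1 = c (w 0) (w (0 + 1)) := (hone 0).symm
            _ ≤ ∑ v, c (w 0) v :=
              Finset.single_le_sum (fun _ _ => Nat.zero_le _) (Finset.mem_univ _)
            _ ≤ ∑ u, ∑ v, c u v :=
              Finset.single_le_sum (f := fun u => ∑ v, c u v)
                (fun _ _ => Nat.zero_le _) (Finset.mem_univ _)
        omega
      obtain ⟨n, d, hd, hdsum⟩ := ih m' hsize hbal'
      refine ⟨n + 1, Fin.cons c d, ?_, ?_⟩
      · intro i
        refine Fin.cases ?_ ?_ i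
        · exact hc
        · intro i'; simpa using hd i'
      · intro u v
        rw [Fin.sum_univ_succ]
        simp only [Fin.cons_zero, Fin.cons_succ]
        rw [hadd u v, hdsum u v]

/-- If in a finite multidigraph `m` the vertex `s` has out-degree
exceeding its in-degree by exactly one, `t ≠ s` has in-degree exceeding its
out-degree by exactly one, and every other vertex is balanced, then `m` is the sum
of a directed path from `s` to `t` and a finite sum of directed cycles. -/
theorem path_plus_cycles_decomposition {V : Type*} [Fintype V]
    (m : V → V → ℕ) (s t : V) (hst : s ≠ t)
    (hs : ∑ u, m s u = (∑ u, m u s) + 1)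
    (ht : ∑ u, m u t = (∑ u, m t u) + 1)
    (hother : ∀ v : V, v ≠ s → v ≠ t → ∑ u, m u v = ∑ u, m v u) :
    ∃ p d : V → V → ℕ, IsPath p s t ∧ IsCycleSum d ∧
      ∀ u v, m u v = p u v + d u v := by
  classical
  set e : V → V → ℕ := fun u v => if u = t ∧ v = s then 1 else 0 with hedef
  set M : V → V → ℕ := fun u v => m u v + e u v with hMdef
  have hecol : ∀ v, ∑ u, e u v = if v = s then 1 else 0 := by
    intro v
    by_cases hv : v = s
    · rw [if_pos hv]
      have h1 : ∀ u, e u v = if u = t then 1 else 0 := by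
        intro u; simp [hedef, hv]
      rw [Finset.sum_congr rfl (fun u _ => h1 u)]
      simp
    · rw [if_neg hv, Finset.sum_eq_zero]
      intro u _
      simp only [hedef]
      exact if_neg (fun h => hv h.2)
  have herow : ∀ v, ∑ u, e v u = if v = t then 1 else 0 := by
    intro v
    by_cases hv : v = t
    · rw [if_pos hv]
      have h1 : ∀ u, e v u = if u = s then 1 else 0 := by
        intro u; simp [hedef, hv]
      rw [Finset.sum_congr rfl (fun u _ => h1 u)]
      simp
    · rw [if_neg hv, Finset.sum_eq_zero]
      intro u _
      simp only [hedef]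
      exact if_neg (fun h => hv h.1)
  have hMbal : ∀ v, ∑ u, M u v = ∑ u, M v u := by
    intro v
    have c1 : ∑ u, M u v = ∑ u, m u v + ∑ u, e u v := by
      simp only [hMdef]; rw [Finset.sum_add_distrib]
    have c2 : ∑ u, M v u = ∑ u, m v u + ∑ u, e v u := by
      simp only [hMdef]; rw [Finset.sum_add_distrib]
    rw [c1, c2, hecol, herow]
    by_cases hvs : v = s
    · subst hvs
      rw [if_pos rfl, if_neg hst]
      omega
    · by_cases hvt : v = t
      · subst hvt
        rw [if_neg (Ne.symm hst), if_pos rfl]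
        omega
      · rw [if_neg hvs, if_neg hvt]
        have := hother v hvs hvt
        omega
  obtain ⟨n, c, hc, hsum⟩ := balanced_isCycleSum (∑ u, ∑ v, M u v) M le_rfl hMbal
  have hMts : M t s = m t s + 1 := by simp [hMdef, hedef]
  have hts : 0 < ∑ i, c i t s := by
    rw [← hsum, hMts]
    omega
  have hex : ∃ i, 0 < c i t s := by
    by_contra hcon
    push_neg at hcon
    simp only [Nat.le_zero] at hcon
    simp [hcon] at hts
  obtain ⟨i0, hi0⟩ := hex
  obtain ⟨n', rfl⟩ : ∃ n', n = n' + 1 := ⟨n - 1, by have := i0.pos; omega⟩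
  obtain ⟨k, w, winj, hone, hzero⟩ := hc i0
  have htsw : ∃ j, t = w j ∧ s = w (j + 1) := by
    by_contra hcon
    push_neg at hcon
    have : c i0 t s = 0 := hzero t s (fun j hj => hcon j hj.1 hj.2)
    omega
  obtain ⟨j, hjt, hjs⟩ := htsw
  have hcts : c i0 t s = 1 := by rw [hjt, hjs]; exact hone j
  set w' : Fin (k + 1) → V := fun i => w (j + 1 + i) with hw'def
  have winj' : Function.Injective w' := by
    intro i1 i2 h
    have := winj h
    exact add_left_cancel this
  set p : V → V → ℕ := fun u v => c i0 u v - e u v with hpdef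
  set d : V → V → ℕ := fun u v => ∑ i : Fin n', c (i0.succAbove i) u v with hddef
  have hlast0 : Fin.last k + (1 : Fin (k+1)) = 0 := by simp
  have hlast : (j : Fin (k+1)) + 1 + Fin.last k = j := by
    have : j + 1 + Fin.last k = j + (Fin.last k + 1) := by abel
    rw [this, hlast0, add_zero]
  have hpath : IsPath p s t := by
    refine ⟨k, w', winj', ?_, ?_, ?_, ?_⟩
    · simp only [hw'def, add_zero]; exact hjs.symm
    · simp only [hw'def]; rw [hlast]; exact hjt.symm
    · intro i
      have hne0 : (j : Fin (k+1)) + 1 + i.castSucc ≠ j := by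
        intro hcon
        have h1 : (j : Fin (k+1)) + (i.castSucc + 1) = j + 0 := by
          rw [add_zero]
          calc (j : Fin (k+1)) + (i.castSucc + 1) = j + 1 + i.castSucc := by abel
            _ = j := hcon
        have h2 : i.castSucc + (1 : Fin (k+1)) = 0 := add_left_cancel h1
        rw [Fin.coeSucc_eq_succ] at h2
        exact (Fin.succ_ne_zero i) h2
      have hsucc : w' i.succ = w ((j + 1 + i.castSucc) + 1) := by
        simp only [hw'def]
        have hidx : (j : Fin (k+1)) + 1 + i.succ = j + 1 + i.castSucc + 1 := by
          rw [← Fin.coeSucc_eq_succ]; abel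
        rw [hidx]
      have hcv : c i0 (w' i.castSucc) (w' i.succ) = 1 := by
        rw [hsucc]; exact hone _
      have hev : e (w' i.castSucc) (w' i.succ) = 0 := by
        simp only [hedef]
        refine if_neg ?_
        rintro ⟨h1, _⟩
        have : (j : Fin (k+1)) + 1 + i.castSucc = j := winj (h1.trans hjt)
        exact hne0 this
      simp only [hpdef]
      omega
    · intro u v h
      by_cases hts' : u = t ∧ v = s
      · have he1 : e u v = 1 := by simp [hedef, hts'.1, hts'.2]
        have hc1 : c i0 u v = 1 := by rw [hts'.1, hts'.2]; exact hcts
        simp only [hpdef]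
        omega
      · have hev : e u v = 0 := by simp only [hedef]; exact if_neg hts'
        have hcv : c i0 u v = 0 := by
          apply hzero
          rintro l ⟨rfl, rfl⟩
          by_cases hlj : l = j
          · subst hlj
            exact hts' ⟨hjt.symm, hjs.symm⟩
          · set i : Fin (k + 1) := l - (j + 1) with hidef
            have hil : (j : Fin (k+1)) + 1 + i = l := by
              simp only [hidef]
              rw [add_comm (j+1), sub_add_cancel]
            have hine : i ≠ Fin.last k := by
              intro hcon
              rw [hcon] at hil
              rw [hlast] at hil
              exact hlj hil.symm
            have hilt : i.val < k := by
              have := i.isLt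
              have : i.val ≠ k := fun hc => hine (Fin.ext hc)
              omega
            set ic : Fin k := ⟨i.val, hilt⟩ with hicdef
            have hicast : ic.castSucc = i := Fin.ext rfl
            apply h ic
            constructor
            · simp only [hw'def]
              rw [hicast, hil]
            · simp only [hw'def]
              rw [← Fin.coeSucc_eq_succ, hicast, ← add_assoc, hil]
        simp only [hpdef]
        omega
  have hcyclesum : IsCycleSum d :=
    ⟨n', fun i => c (i0.succAbove i), fun i => hc _, fun u v => rfl⟩
  refine ⟨p, d, hpath, hcyclesum, ?_⟩
  intro u v
  have h1 : M u v = c i0 u v + d u v := by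
    rw [hsum]
    exact Fin.sum_univ_succAbove (fun i => c i u v) i0
  have h2 : M u v = m u v + e u v := rfl
  have he1 : e u v ≤ c i0 u v := by
    simp only [hedef]
    split
    · next hh => obtain ⟨rfl, rfl⟩ := hh; omega
    · exact Nat.zero_le _
  simp only [hpdef]
  omega
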